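/- Let μ > 0, β > 0, c ∈ ℝ, w ∈ ℝⁿ, and let φ_1, …, φ_m : ℝⁿ → ℝ be differentiable, with ‖∇φ_i(y)‖ ≤ M_i for all y ∈ ℝⁿ and ∇φ_i Lipschitz with constant L_i (i.e. φ_i is L_i-smooth), for each i. Define ℘₂(z) := −μ·log(−z) if z ≤ −e^{−c/μ} and ℘₂(z) := μ·e^{c/μ}·z + μ + c otherwise, and ψ̃(y) := ∑_{i=1}^m ℘₂(φ_i(y)) + (β/2)‖y − w‖². Then ψ̃ is differentiable on ℝⁿ and its gradient is Lipschitz with constant ∑_{i=1}^m ( μ·e^{c/μ}·L_i + μ·e^{2c/μ}·M_i² ) + β; the proof uses that ℘₂ is continuously differentiable with 0 ≤ ℘₂′(z) ≤ μ·e^{c/μ} and ℘₂′ Lipschitz with constant μ·e^{2c/μ}. -/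

import Mathlib

open InnerProductSpace Finset

/-- Prop: smoothness of the extended-barrier y-subproblem
objective: with the extended barrier `℘₂`, the objective
`ψ̃(y) = ∑ᵢ ℘₂(φᵢ(y)) + (β/2)‖y - w‖²` is differentiable with gradient Lipschitz
with constant `∑ᵢ (μ e^{c/μ} Lᵢ + μ e^{2c/μ} Mᵢ²) + β`. -/
theorem stmt19 {n m : ℕ} (μ β c : ℝ) (hμ : 0 < μ) (hβ : 0 < β)
    (w : EuclideanSpace ℝ (Fin n))
    (φ : Fin m → EuclideanSpace ℝ (Fin n) → ℝ)
    (M L : Fin m → ℝ)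
    (hdiff : ∀ i, Differentiable ℝ (φ i))
    (hM : ∀ i y, ‖gradient (φ i) y‖ ≤ M i)
    (hL : ∀ i x y, ‖gradient (φ i) y - gradient (φ i) x‖ ≤ L i * ‖y - x‖)
    (p2 : ℝ → ℝ)
    (hp2 : p2 = fun z => if z ≤ -Real.exp (-c/μ) then -μ * Real.log (-z)
      else μ * Real.exp (c/μ) * z + μ + c)
    (ψt : EuclideanSpace ℝ (Fin n) → ℝ)
    (hψt : ψt = fun y => (∑ i, p2 (φ i y)) + (β/2) * ‖y - w‖^2) :
    Differentiable ℝ ψt ∧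
    ∀ x y, ‖gradient ψt y - gradient ψt x‖
      ≤ ((∑ i, (μ * Real.exp (c/μ) * L i + μ * Real.exp (2*c/μ) * (M i)^2)) + β)
          * ‖y - x‖ := by
  set a : ℝ := Real.exp (-c/μ) with ha
  have ha0 : 0 < a := Real.exp_pos _
  have hA : Real.exp (c/μ) = a⁻¹ := by
    rw [ha, ← Real.exp_neg]; ring_nf
  have hA2 : Real.exp (2*c/μ) = (a^2)⁻¹ := by
    have : (2:ℝ)*c/μ = c/μ + c/μ := by ring
    rw [this, Real.exp_add, hA, sq, mul_inv]
  -- the derivative of p2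
  set q : ℝ → ℝ := fun z => if z ≤ -a then -μ/z else μ/a with hqdef
  have hf1 : ∀ z : ℝ, z < 0 → HasDerivAt (fun z : ℝ => -μ * Real.log (-z)) (-μ/z) z := by
    intro z hz
    have h1 : HasDerivAt (fun z : ℝ => -z) (-1) z := (hasDerivAt_id z).neg
    have h2 := (Real.hasDerivAt_log (by linarith : -z ≠ 0)).comp z h1
    have h3 := h2.const_mul (-μ)
    exact h3.congr_deriv (by ring)
  have hf2 : ∀ z : ℝ, HasDerivAt (fun z : ℝ => μ * Real.exp (c/μ) * z + μ + c) (μ/a) z := by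
    intro z
    have h1 : HasDerivAt (fun z : ℝ => μ * Real.exp (c/μ) * z + μ + c)
        (μ * Real.exp (c/μ) * 1) z :=
      (((hasDerivAt_id z).const_mul (μ * Real.exp (c/μ))).add_const μ).add_const c
    convert h1 using 1
    rw [hA]; field_simp
  have hval : ∀ z : ℝ, -a ≤ z → p2 z = μ * Real.exp (c/μ) * z + μ + c := by
    intro z hz
    rcases eq_or_lt_of_le hz with h | h
    · rw [hp2]
      simp only [← h, ← ha, if_pos le_rfl]
      rw [neg_neg, ha, Real.log_exp, hA]
      field_simp
      rw [← neg_div, ← ha]; ring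
    · rw [hp2]; simp only [← ha, if_neg (not_le.2 h)]
  have hq : ∀ z : ℝ, HasDerivAt p2 (q z) z := by
    intro z
    rcases lt_trichotomy z (-a) with hz | hz | hz
    · have hz0 : z < 0 := by linarith
      have hqz : q z = -μ/z := if_pos hz.le
      rw [hqz]
      refine (hf1 z hz0).congr_of_eventuallyEq ?_
      filter_upwards [Iio_mem_nhds hz] with t ht
      rw [hp2]
      simp only [if_pos (le_of_lt (Set.mem_Iio.1 ht))]
    · subst hz
      have hqz : q (-a) = μ/a := by
        simp only [hqdef, if_pos le_rfl, neg_div_neg_eq]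
      rw [hqz]
      have hleft : HasDerivWithinAt p2 (μ/a) (Set.Iic (-a)) (-a) := by
        have h := (hf1 (-a) (by linarith)).hasDerivWithinAt (s := Set.Iic (-a))
        have he : -μ/(-a) = μ/a := neg_div_neg_eq μ a
        rw [he] at h
        refine h.congr (fun t ht => ?_) ?_
        · rw [hp2]; simp only [if_pos (Set.mem_Iic.1 ht)]
        · rw [hp2]; simp only [if_pos (le_refl (-a))]
      have hright : HasDerivWithinAt p2 (μ/a) (Set.Ici (-a)) (-a) := by
        have h := (hf2 (-a)).hasDerivWithinAt (s := Set.Ici (-a))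
        refine h.congr (fun t ht => hval t (Set.mem_Ici.1 ht)) (hval _ le_rfl)
      have := hleft.union hright
      rw [Set.Iic_union_Ici] at this
      exact hasDerivWithinAt_univ.1 this
    · have hqz : q z = μ/a := if_neg (not_le.2 hz)
      rw [hqz]
      refine ((hf2 z)).congr_of_eventuallyEq ?_
      filter_upwards [Ioi_mem_nhds hz] with t ht
      exact hval t (le_of_lt ht)
  -- bounds on q
  have hq0 : ∀ z, 0 ≤ q z := by
    intro z
    by_cases hz : z ≤ -a
    · simp only [hqdef, if_pos hz]
      have : z < 0 := by linarith
      rw [div_nonneg_iff]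
      right; constructor <;> linarith
    · simp only [hqdef, if_neg hz]
      exact div_nonneg hμ.le ha0.le
  have hqub : ∀ z, q z ≤ μ/a := by
    intro z
    by_cases hz : z ≤ -a
    · simp only [hqdef, if_pos hz]
      rw [neg_div, ← div_neg]
      exact div_le_div₀ hμ.le le_rfl ha0 (by linarith)
    · simp only [hqdef, if_neg hz]
      exact le_rfl
  -- Lipschitz property of q (for ordered arguments)
  have hqmono : ∀ x y : ℝ, x ≤ y → q x ≤ q y := by
    intro x y hxy
    by_cases hy : y ≤ -a
    · have hx : x ≤ -a := hxy.trans hy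
      simp only [hqdef, if_pos hx, if_pos hy]
      rw [neg_div, ← div_neg, neg_div, ← div_neg]
      exact div_le_div₀ hμ.le le_rfl (by linarith) (by linarith)
    · have hy' : q y = μ/a := by simp only [hqdef, if_neg hy]
      rw [hy']; exact hqub x
  have hqlipo : ∀ x y : ℝ, x ≤ y → q y - q x ≤ μ/a^2 * (y - x) := by
    intro x y hxy
    by_cases hy : y ≤ -a
    · have hx : x ≤ -a := hxy.trans hy
      have hx0 : x < 0 := by linarith
      have hy0 : y < 0 := by linarith
      have hx' : x ≠ 0 := ne_of_lt hx0
      have hy' : y ≠ 0 := ne_of_lt hy0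
      have he : q y - q x = μ * (y - x) / (x * y) := by
        simp only [hqdef, if_pos hx, if_pos hy]
        field_simp
        ring
      rw [he]
      have hxy0 : a^2 ≤ x * y := by nlinarith [mul_le_mul (by linarith : a ≤ -x) (by linarith : a ≤ -y) ha0.le (by linarith : (0:ℝ) ≤ -x)]
      calc μ * (y - x) / (x * y) ≤ μ * (y - x) / (a^2) := by
            refine div_le_div₀ (mul_nonneg hμ.le (by linarith)) le_rfl (by positivity) hxy0
        _ = μ/a^2 * (y - x) := by ring
    · by_cases hx : x ≤ -a
      · have hx0 : x < 0 := by linarith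
        have hx' : x ≠ 0 := ne_of_lt hx0
        have ha' : a ≠ 0 := ne_of_gt ha0
        have he : q y - q x = μ * (-x - a) / (a * (-x)) := by
          simp only [hqdef, if_pos hx, if_neg hy]
          field_simp
          ring
        rw [he]
        calc μ * (-x - a) / (a * (-x)) ≤ μ * (y - x) / (a * a) := by
              refine div_le_div₀ (mul_nonneg hμ.le (by linarith))
                (mul_le_mul_of_nonneg_left (by linarith) hμ.le)
                (by positivity) (by nlinarith)
          _ = μ/a^2 * (y - x) := by rw [sq]; ring
      · simp only [hqdef, if_neg hx, if_neg hy]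
        have h0 : (0:ℝ) ≤ μ/a^2 * (y - x) :=
          mul_nonneg (div_nonneg hμ.le (sq_nonneg a)) (by linarith)
        linarith
  have hqlip : ∀ x y : ℝ, |q y - q x| ≤ μ/a^2 * |y - x| := by
    intro x y
    rcases le_total x y with h | h
    · rw [abs_of_nonneg (by linarith [hqmono x y h]), abs_of_nonneg (by linarith)]
      exact hqlipo x y h
    · rw [abs_of_nonpos (by linarith [hqmono y x h]), abs_of_nonpos (by linarith)]
      have := hqlipo y x h
      linarith
  -- gradient of ψt
  set G : EuclideanSpace ℝ (Fin n) → EuclideanSpace ℝ (Fin n) :=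
    fun y => (∑ i, q (φ i y) • gradient (φ i) y) + β • (y - w) with hG
  have hgrad : ∀ y, HasGradientAt ψt (G y) y := by
    intro y
    have hsumF : HasFDerivAt (fun t => ∑ i, p2 (φ i t))
        (∑ i, q (φ i y) • (toDual ℝ _ (gradient (φ i) y))) y := by
      refine HasFDerivAt.fun_sum fun i _ => ?_
      exact (hq (φ i y)).comp_hasFDerivAt y ((hdiff i y).hasGradientAt.hasFDerivAt)
    have hquad : HasFDerivAt (fun t : EuclideanSpace ℝ (Fin n) => (β/2) * ‖t - w‖^2)
        (β • innerSL ℝ (y - w)) y := by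
      have h1 : HasFDerivAt (fun t : EuclideanSpace ℝ (Fin n) => t - w)
          (ContinuousLinearMap.id ℝ _) y := (hasFDerivAt_id y).sub_const w
      have h2 := (h1.norm_sq).const_mul (β/2)
      refine h2.congr_fderiv ?_
      ext u
      simp only [ContinuousLinearMap.smul_apply, innerSL_apply_apply, ContinuousLinearMap.coe_smul',
        Pi.smul_apply, ContinuousLinearMap.coe_comp', Function.comp_apply,
        ContinuousLinearMap.coe_id', id_eq, smul_eq_mul]
      ring
    have hψF : HasFDerivAt ψt
        ((∑ i, q (φ i y) • (toDual ℝ _ (gradient (φ i) y))) + β • innerSL ℝ (y - w)) y := by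
      rw [hψt]; exact hsumF.add hquad
    have hdual : toDual ℝ (EuclideanSpace ℝ (Fin n)) (G y)
        = (∑ i, q (φ i y) • (toDual ℝ _ (gradient (φ i) y))) + β • innerSL ℝ (y - w) := by
      ext u
      simp only [hG, InnerProductSpace.toDual_apply_apply, ContinuousLinearMap.add_apply,
        ContinuousLinearMap.sum_apply, ContinuousLinearMap.smul_apply, innerSL_apply_apply,
        smul_eq_mul, inner_add_left, sum_inner, real_inner_smul_left]
    rw [HasGradientAt, HasGradientAtFilter, hdual]
    exact hψF
  constructor
  · exact fun y => (hgrad y).differentiableAt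
  · intro x y
    rw [(hgrad y).gradient, (hgrad x).gradient]
    -- Lipschitz bound for each φ i
    have hφlip : ∀ i, |φ i y - φ i x| ≤ M i * ‖y - x‖ := by
      intro i
      have hb : ∀ z ∈ (Set.univ : Set (EuclideanSpace ℝ (Fin n))), ‖fderiv ℝ (φ i) z‖ ≤ M i := by
        intro z _
        have : ‖fderiv ℝ (φ i) z‖ = ‖gradient (φ i) z‖ := by
          rw [gradient]; exact ((toDual ℝ _).symm.norm_map _).symm
        rw [this]; exact hM i z
      have := Convex.norm_image_sub_le_of_norm_fderiv_le (f := φ i) (s := Set.univ)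
        (fun z _ => (hdiff i z)) hb convex_univ (Set.mem_univ x) (Set.mem_univ y)
      simpa [Real.norm_eq_abs] using this
    have hMnn : ∀ i, 0 ≤ M i := fun i => le_trans (norm_nonneg _) (hM i x)
    have hterm : ∀ i, ‖q (φ i y) • gradient (φ i) y - q (φ i x) • gradient (φ i) x‖
        ≤ (μ * Real.exp (c/μ) * L i + μ * Real.exp (2*c/μ) * (M i)^2) * ‖y - x‖ := by
      intro i
      have hsplit : q (φ i y) • gradient (φ i) y - q (φ i x) • gradient (φ i) x
          = q (φ i y) • (gradient (φ i) y - gradient (φ i) x)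
            + (q (φ i y) - q (φ i x)) • gradient (φ i) x := by module
      calc ‖q (φ i y) • gradient (φ i) y - q (φ i x) • gradient (φ i) x‖
          ≤ ‖q (φ i y) • (gradient (φ i) y - gradient (φ i) x)‖
            + ‖(q (φ i y) - q (φ i x)) • gradient (φ i) x‖ := by
            rw [hsplit]; exact norm_add_le _ _
        _ = q (φ i y) * ‖gradient (φ i) y - gradient (φ i) x‖
            + |q (φ i y) - q (φ i x)| * ‖gradient (φ i) x‖ := by
            rw [norm_smul, norm_smul, Real.norm_eq_abs, Real.norm_eq_abs,
              abs_of_nonneg (hq0 _)]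
        _ ≤ (μ/a) * (L i * ‖y - x‖) + (μ/a^2 * (M i * ‖y - x‖)) * M i := by
            refine add_le_add ?_ ?_
            · exact mul_le_mul (hqub _) (hL i x y) (norm_nonneg _)
                (div_nonneg hμ.le ha0.le)
            · refine mul_le_mul ?_ (hM i x) (norm_nonneg _)
                (mul_nonneg (div_nonneg hμ.le (sq_nonneg a))
                  (mul_nonneg (hMnn i) (norm_nonneg _)))
              refine le_trans (hqlip _ _)
                (mul_le_mul_of_nonneg_left (hφlip i)
                  (div_nonneg hμ.le (sq_nonneg a)))
        _ = (μ * Real.exp (c/μ) * L i + μ * Real.exp (2*c/μ) * (M i)^2) * ‖y - x‖ := by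
            rw [hA, hA2]
            field_simp
    have hkey : G y - G x = (∑ i, (q (φ i y) • gradient (φ i) y - q (φ i x) • gradient (φ i) x))
        + β • (y - x) := by
      rw [hG]
      simp only [Finset.sum_sub_distrib, smul_sub]
      abel
    rw [hkey]
    calc ‖(∑ i, (q (φ i y) • gradient (φ i) y - q (φ i x) • gradient (φ i) x)) + β • (y - x)‖
        ≤ ‖∑ i, (q (φ i y) • gradient (φ i) y - q (φ i x) • gradient (φ i) x)‖
          + ‖β • (y - x)‖ := norm_add_le _ _
      _ ≤ (∑ i, ‖q (φ i y) • gradient (φ i) y - q (φ i x) • gradient (φ i) x‖)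
          + β * ‖y - x‖ := by
          refine add_le_add (norm_sum_le _ _) ?_
          rw [norm_smul, Real.norm_eq_abs, abs_of_pos hβ]
      _ ≤ (∑ i, (μ * Real.exp (c/μ) * L i + μ * Real.exp (2*c/μ) * (M i)^2) * ‖y - x‖)
          + β * ‖y - x‖ := by
          refine add_le_add (Finset.sum_le_sum fun i _ => hterm i) le_rfl
      _ = ((∑ i, (μ * Real.exp (c/μ) * L i + μ * Real.exp (2*c/μ) * (M i)^2)) + β) * ‖y - x‖ := by
          rw [← Finset.sum_mul]; ring
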